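/- Fix a finite grid of N×M pixels; identify images u with vectors in ℝ^{N·M} and dual fields ξ with elements of (ℝ²)^{N·M}, both equipped with Euclidean norms. Let ∇ʰ : ℝ^{N·M} → (ℝ²)^{N·M} be a linear map, divʰ = -(∇ʰ)* its negative adjoint, and P the componentwise projection (P ξ)_k = ξ_k / max(‖ξ_k‖, 1). Let λ > 0, f ∈ ℝ^{N·M}, and let J_h(u) = Σ_k ‖(∇ʰ u)_k‖ + (λ/2) Σ_k (u_k - f_k)² with minimizer ū. Given positive time steps δtⁿ, δτⁿ and an initialization (u⁰, ξ⁰), define the Chan–Zhu iteration ξⁿ = P(ξⁿ⁻¹ + δτⁿ ∇ʰ uⁿ⁻¹), uⁿ = uⁿ⁻¹ + δtⁿ (divʰ ξⁿ - λ(uⁿ⁻¹ - f)) for n ≥ 1. Then for every n ≥ 1, ‖uⁿ - ū‖ ≤ (1/2) ( ‖∂ₜuⁿ‖/λ + √( ‖∂ₜuⁿ‖²/λ² + 8 √(N·M) ‖∂ₜξⁿ‖ / λ ) ), where ∂ₜuⁿ = (uⁿ⁺¹ - uⁿ)/δtⁿ⁺¹ and ∂ₜξⁿ = (ξⁿ⁺¹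 - ξⁿ)/δτⁿ⁺¹. -/

import Mathlib

open scoped InnerProductSpace

/-- Images on an `N × M` grid: vectors in `ℝ^{N·M}` with the Euclidean inner product. -/
abbrev GridImage (N M : ℕ) := EuclideanSpace ℝ (Fin N × Fin M)

/-- Dual fields on an `N × M` grid: elements of `(ℝ²)^{N·M}` with the Euclidean
inner product. -/
abbrev GridField (N M : ℕ) := PiLp 2 (fun _ : Fin N × Fin M => EuclideanSpace ℝ (Fin 2))

/-- The componentwise projection on the unit ball: `(P ξ)_k = ξ_k / max(‖ξ_k‖, 1)`. -/
noncomputable def gridProj {N M : ℕ} (ξ : GridField N M) : GridField N M :=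
  WithLp.toLp 2 (fun k => (max ‖ξ k‖ 1)⁻¹ • ξ k)

lemma quad_root_bound (r a c : ℝ) (hc : 0 ≤ c)
    (h : r ^ 2 ≤ a * r + c) : r ≤ (a + Real.sqrt (a ^ 2 + 4 * c)) / 2 := by
  have h4 : (0:ℝ) ≤ a ^ 2 + 4 * c := by positivity
  have hs := Real.sq_sqrt h4
  have hs0 := Real.sqrt_nonneg (a ^ 2 + 4 * c)
  nlinarith [sq_nonneg (2 * r - a - Real.sqrt (a ^ 2 + 4 * c)),
    sq_nonneg (2 * r - a + Real.sqrt (a ^ 2 + 4 * c))]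

lemma proj_ball_ineq (η z : EuclideanSpace ℝ (Fin 2)) (hz : ‖z‖ ≤ 1) :
    ⟪η - (max ‖η‖ 1)⁻¹ • η, z - (max ‖η‖ 1)⁻¹ • η⟫_ℝ ≤ 0 := by
  rcases le_or_gt ‖η‖ 1 with h | h
  · rw [max_eq_right h]; simp
  · rw [max_eq_left h.le]
    have hpos : (0:ℝ) < ‖η‖ := lt_trans one_pos h
    have h1 : η - ‖η‖⁻¹ • η = (1 - ‖η‖⁻¹) • η := by rw [sub_smul, one_smul]
    rw [h1, real_inner_smul_left, inner_sub_right, real_inner_smul_right]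
    have h2 : ⟪η, η⟫_ℝ = ‖η‖ ^ 2 := real_inner_self_eq_norm_sq η
    have h3 : ⟪η, z⟫_ℝ ≤ ‖η‖ := by
      calc ⟪η, z⟫_ℝ ≤ ‖η‖ * ‖z‖ := real_inner_le_norm η z
      _ ≤ ‖η‖ * 1 := by nlinarith
      _ = ‖η‖ := mul_one _
    have h4 : ‖η‖⁻¹ * ⟪η, η⟫_ℝ = ‖η‖ := by rw [h2]; field_simp
    have h5 : (0:ℝ) ≤ 1 - ‖η‖⁻¹ := by
      have : ‖η‖⁻¹ ≤ 1 := by rw [inv_le_one_iff₀]; right; exact h.le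
      linarith
    rw [h4]; nlinarith

lemma gridProj_norm_le {N M : ℕ} (ξ : GridField N M) (k : Fin N × Fin M) :
    ‖gridProj ξ k‖ ≤ 1 := by
  show ‖(max ‖ξ k‖ 1)⁻¹ • ξ k‖ ≤ 1
  rw [norm_smul, Real.norm_eq_abs]
  have h1 : (0:ℝ) < max ‖ξ k‖ 1 := lt_max_of_lt_right one_pos
  rw [abs_of_pos (inv_pos.mpr h1), inv_mul_le_iff₀ h1, mul_one]
  exact le_max_left _ _


set_option maxHeartbeats 1000000 in
/-- A posteriori error estimate for the Chan–Zhu primal–dual iteration for the discrete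
ROF energy `J_h(u) = Σ_k ‖(∇ʰu)_k‖ + (λ/2) Σ_k (u_k - f_k)²`, with minimizer `ū`:
`‖uⁿ - ū‖ ≤ (1/2) (‖∂ₜuⁿ‖/λ + √(‖∂ₜuⁿ‖²/λ² + 8 √(N·M) ‖∂ₜξⁿ‖/λ))`. -/
theorem chan_zhu_ROF_a_posteriori_estimate
    (N M : ℕ) (gradh : GridImage N M →ₗ[ℝ] GridField N M)
    (lam : ℝ) (hlam : 0 < lam) (f : GridImage N M)
    (Jh : GridImage N M → ℝ)
    (hJh : ∀ u, Jh u = (∑ k, ‖gradh u k‖) + lam / 2 * ∑ k, (u k - f k) ^ 2)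
    (ubar : GridImage N M) (hubar : ∀ u, Jh ubar ≤ Jh u)
    (δt δτ : ℕ → ℝ) (hδt : ∀ n, 0 < δt n) (hδτ : ∀ n, 0 < δτ n)
    (u : ℕ → GridImage N M) (ξ : ℕ → GridField N M)
    (hξ_iter : ∀ n : ℕ, ξ (n + 1) = gridProj (ξ n + δτ (n + 1) • gradh (u n)))
    (hu_iter : ∀ n : ℕ, u (n + 1) =
      u n + δt (n + 1) • ((-(LinearMap.adjoint gradh)) (ξ (n + 1)) - lam • (u n - f))) :
    ∀ n : ℕ, 1 ≤ n →
      ‖u n - ubar‖ ≤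
        (1 / 2) * (‖(δt (n + 1))⁻¹ • (u (n + 1) - u n)‖ / lam +
          Real.sqrt (‖(δt (n + 1))⁻¹ • (u (n + 1) - u n)‖ ^ 2 / lam ^ 2 +
            8 * Real.sqrt (N * M) * ‖(δτ (n + 1))⁻¹ • (ξ (n + 1) - ξ n)‖ / lam)) := by
  intro n hn
  have hδt' : (0:ℝ) < δt (n+1) := hδt (n+1)
  have hδτ' : (0:ℝ) < δτ (n+1) := hδτ (n+1)
  set D : GridImage N M := (δt (n+1))⁻¹ • (u (n+1) - u n) with hDdef
  set E : GridField N M := (δτ (n+1))⁻¹ • (ξ (n+1) - ξ n) with hEdef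
  -- Fact A : adjoint gradh applied to ξ(n+1)
  have hA : (LinearMap.adjoint gradh) (ξ (n+1)) = -D - lam • (u n - f) := by
    have h2 : u (n+1) - u n
        = δt (n+1) • ((-(LinearMap.adjoint gradh)) (ξ (n+1)) - lam • (u n - f)) := by
      rw [hu_iter n]; abel
    have h3 : D = (-(LinearMap.adjoint gradh)) (ξ (n+1)) - lam • (u n - f) := by
      rw [hDdef, h2, smul_smul, inv_mul_cancel₀ (ne_of_gt hδt'), one_smul]
    rw [LinearMap.neg_apply] at h3
    rw [h3]; module
  -- componentwise unit-ball bound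
  have hξ'norm : ∀ k, ‖ξ (n+1) k‖ ≤ 1 := by
    intro k; rw [hξ_iter n]; exact gridProj_norm_le _ k
  -- componentwise projection estimate
  have hcomp : ∀ k, ‖gradh (u n) k‖ - ⟪ξ (n+1) k, gradh (u n) k⟫_ℝ ≤ 2 * ‖E k‖ := by
    intro k
    set g : EuclideanSpace ℝ (Fin 2) := gradh (u n) k with hg
    set η : GridField N M := ξ n + δτ (n+1) • gradh (u n) with hη
    have hξk : ξ (n+1) k = (max ‖η k‖ 1)⁻¹ • η k := by rw [hξ_iter n]; rfl
    have hball : ∀ z : EuclideanSpace ℝ (Fin 2), ‖z‖ ≤ 1 →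
        ⟪g - E k, z - ξ (n+1) k⟫_ℝ ≤ 0 := by
      intro z hz
      have h0 := proj_ball_ineq (η k) z hz
      rw [← hξk] at h0
      have hηk : η k - ξ (n+1) k = δτ (n+1) • (g - E k) := by
        have hEk : E k = (δτ (n+1))⁻¹ • (ξ (n+1) k - ξ n k) := by
          rw [hEdef]; simp [PiLp.smul_apply, PiLp.sub_apply]
        have hηkk : η k = ξ n k + δτ (n+1) • g := by
          rw [hη]; simp [PiLp.add_apply, PiLp.smul_apply, hg]
        rw [hηkk, hEk, smul_sub, smul_smul, mul_inv_cancel₀ (ne_of_gt hδτ'), one_smul]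
        abel
      rw [hηk, real_inner_smul_left] at h0
      rcases mul_nonpos_iff.mp h0 with ⟨_, h⟩ | ⟨h, _⟩
      · exact h
      · linarith
    rcases eq_or_ne g 0 with hg0 | hg0
    · rw [hg0]; simp
    · have hgpos : (0:ℝ) < ‖g‖ := norm_pos_iff.mpr hg0
      have hz1 : ‖(‖g‖⁻¹ • g)‖ = 1 := by
        rw [norm_smul, Real.norm_eq_abs, abs_of_pos (inv_pos.mpr hgpos),
          inv_mul_cancel₀ (ne_of_gt hgpos)]
      have h1 := hball (‖g‖⁻¹ • g) (le_of_eq hz1)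
      rw [inner_sub_left, inner_sub_right, inner_sub_right] at h1
      have h2 : ⟪g, ‖g‖⁻¹ • g⟫_ℝ = ‖g‖ := by
        rw [real_inner_smul_right, real_inner_self_eq_norm_sq, sq, ← mul_assoc,
          inv_mul_cancel₀ (ne_of_gt hgpos), one_mul]
      have h3 : ⟪E k, ‖g‖⁻¹ • g⟫_ℝ ≤ ‖E k‖ := by
        calc ⟪E k, ‖g‖⁻¹ • g⟫_ℝ ≤ ‖E k‖ * ‖(‖g‖⁻¹ • g)‖ := real_inner_le_norm _ _
        _ = ‖E k‖ := by rw [hz1, mul_one]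
      have h4 : -⟪E k, ξ (n+1) k⟫_ℝ ≤ ‖E k‖ := by
        have ha := abs_real_inner_le_norm (E k) (ξ (n+1) k)
        have hb : ‖E k‖ * ‖ξ (n+1) k‖ ≤ ‖E k‖ * 1 :=
          mul_le_mul_of_nonneg_left (hξ'norm k) (norm_nonneg _)
        have := neg_abs_le ⟪E k, ξ (n+1) k⟫_ℝ
        linarith
      have h5 : ⟪ξ (n+1) k, g⟫_ℝ = ⟪g, ξ (n+1) k⟫_ℝ := real_inner_comm _ _
      linarith
  -- summed gap
  set eps : ℝ := ∑ k, (‖gradh (u n) k‖ - ⟪ξ (n+1) k, gradh (u n) k⟫_ℝ) with hepsdef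
  -- Cauchy–Schwarz
  have hcs : ∑ k, ‖E k‖ ≤ Real.sqrt ((N:ℝ) * (M:ℝ)) * ‖E‖ := by
    set a : GridImage N M := WithLp.toLp 2 (fun k => ‖E k‖ : Fin N × Fin M → ℝ) with hadef
    set b : GridImage N M := WithLp.toLp 2 (fun _ => 1 : Fin N × Fin M → ℝ) with hbdef
    have hab : ⟪a, b⟫_ℝ = ∑ k, ‖E k‖ := by
      simp [PiLp.inner_apply, RCLike.inner_apply, hadef, hbdef]
    have hna : ‖a‖ = ‖E‖ := by
      have h1 : ‖a‖ ^ 2 = ‖E‖ ^ 2 := by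
        rw [PiLp.norm_sq_eq_of_L2, PiLp.norm_sq_eq_of_L2]
        exact Finset.sum_congr rfl fun k _ => by
          simp [hadef, Real.norm_eq_abs, abs_norm]
      calc ‖a‖ = Real.sqrt (‖a‖ ^ 2) := (Real.sqrt_sq (norm_nonneg _)).symm
        _ = Real.sqrt (‖E‖ ^ 2) := by rw [h1]
        _ = ‖E‖ := Real.sqrt_sq (norm_nonneg _)
    have hnb : ‖b‖ = Real.sqrt ((N:ℝ) * (M:ℝ)) := by
      have h1 : ‖b‖ ^ 2 = (N:ℝ) * (M:ℝ) := by
        rw [PiLp.norm_sq_eq_of_L2]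
        simp only [hbdef, norm_one, one_pow, Finset.sum_const, Finset.card_univ,
          nsmul_eq_mul, mul_one, Fintype.card_prod, Fintype.card_fin]
        push_cast
        ring
      rw [← h1, Real.sqrt_sq (norm_nonneg _)]
    calc ∑ k, ‖E k‖ = ⟪a, b⟫_ℝ := hab.symm
      _ ≤ ‖a‖ * ‖b‖ := real_inner_le_norm a b
      _ = Real.sqrt ((N:ℝ) * (M:ℝ)) * ‖E‖ := by rw [hna, hnb, mul_comm]
  have heps_le : eps ≤ 2 * Real.sqrt ((N:ℝ) * (M:ℝ)) * ‖E‖ := by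
    have h1 : eps ≤ ∑ k, 2 * ‖E k‖ := Finset.sum_le_sum fun k _ => hcomp k
    have h2 : ∑ k, 2 * ‖E k‖ = 2 * ∑ k, ‖E k‖ := by rw [Finset.mul_sum]
    linarith [hcs]
  -- squared distance
  set Ssq : ℝ := ∑ k, (u n k - ubar k) ^ 2 with hSdef
  have hSnn : (0:ℝ) ≤ Ssq := Finset.sum_nonneg fun k _ => sq_nonneg _
  have hnormsq : ‖u n - ubar‖ ^ 2 = Ssq := by
    rw [PiLp.norm_sq_eq_of_L2]
    exact Finset.sum_congr rfl fun k _ => by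
      simp [PiLp.sub_apply, Real.norm_eq_abs, sq_abs]
  -- strong convexity via convex combinations
  have hkey : ∀ t : ℝ, 0 < t → t ≤ 1 → lam / 2 * ((1 - t) * Ssq) ≤ Jh (u n) - Jh ubar := by
    intro t ht ht1
    set m : GridImage N M := ubar + t • (u n - ubar) with hmdef
    have hmk : ∀ k, m k = ubar k + t * (u n k - ubar k) := by
      intro k
      simp [hmdef, PiLp.add_apply, PiLp.smul_apply, PiLp.sub_apply, smul_eq_mul]
    have hTV : ∑ k, ‖gradh m k‖
        ≤ (1 - t) * ∑ k, ‖gradh ubar k‖ + t * ∑ k, ‖gradh (u n) k‖ := by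
      rw [Finset.mul_sum, Finset.mul_sum, ← Finset.sum_add_distrib]
      refine Finset.sum_le_sum fun k _ => ?_
      have hgm : gradh m k = (1 - t) • gradh ubar k + t • gradh (u n) k := by
        rw [hmdef, map_add, map_smul, map_sub]
        simp only [PiLp.add_apply, PiLp.smul_apply, PiLp.sub_apply]
        module
      rw [hgm]
      calc ‖(1 - t) • gradh ubar k + t • gradh (u n) k‖
          ≤ ‖(1 - t) • gradh ubar k‖ + ‖t • gradh (u n) k‖ := norm_add_le _ _
        _ = (1 - t) * ‖gradh ubar k‖ + t * ‖gradh (u n) k‖ := by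
            rw [norm_smul, norm_smul, Real.norm_eq_abs, Real.norm_eq_abs,
              abs_of_nonneg (by linarith), abs_of_nonneg ht.le]
    have hQ : ∑ k, (m k - f k) ^ 2
        = (1 - t) * ∑ k, (ubar k - f k) ^ 2 + t * ∑ k, (u n k - f k) ^ 2
          - t * (1 - t) * Ssq := by
      rw [hSdef, Finset.mul_sum, Finset.mul_sum, Finset.mul_sum, ← Finset.sum_add_distrib,
        ← Finset.sum_sub_distrib]
      exact Finset.sum_congr rfl fun k _ => by rw [hmk k]; ring
    have hmin := hubar m
    rw [hJh m, hJh ubar] at hmin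
    rw [hJh (u n), hJh ubar]
    have hcomb : (∑ k, ‖gradh ubar k‖) + lam / 2 * ∑ k, (ubar k - f k) ^ 2
        ≤ ((1 - t) * ∑ k, ‖gradh ubar k‖ + t * ∑ k, ‖gradh (u n) k‖)
          + lam / 2 * ((1 - t) * ∑ k, (ubar k - f k) ^ 2 + t * ∑ k, (u n k - f k) ^ 2
            - t * (1 - t) * Ssq) := by
      calc (∑ k, ‖gradh ubar k‖) + lam / 2 * ∑ k, (ubar k - f k) ^ 2
          ≤ (∑ k, ‖gradh m k‖) + lam / 2 * ∑ k, (m k - f k) ^ 2 := hmin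
        _ ≤ _ := by rw [hQ]; linarith [hTV]
    have step : t * (lam / 2 * ((1 - t) * Ssq))
        ≤ t * ((∑ k, ‖gradh (u n) k‖ + lam / 2 * ∑ k, (u n k - f k) ^ 2)
            - ((∑ k, ‖gradh ubar k‖) + lam / 2 * ∑ k, (ubar k - f k) ^ 2)) := by
      linarith [hcomb]
    have := (mul_le_mul_iff_right₀ ht).mp step
    linarith
  have hsc : lam / 2 * Ssq ≤ Jh (u n) - Jh ubar := by
    refine le_of_forall_pos_le_add fun ε hε => ?_
    rcases eq_or_lt_of_le hSnn with h0 | h0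
    · have h1 := hkey 1 one_pos le_rfl
      rw [← h0] at h1 ⊢
      simp only [mul_zero, sub_zero, one_mul] at h1 ⊢
      linarith
    · set t : ℝ := min (ε / (lam / 2 * Ssq)) 1 with htdef
      have htpos : 0 < t := lt_min (div_pos hε (by positivity)) one_pos
      have h1 := hkey t htpos (min_le_right _ _)
      have h4 : (0:ℝ) < lam / 2 * Ssq := by positivity
      have h2 : lam / 2 * (t * Ssq) ≤ ε := by
        have h3 : t ≤ ε / (lam / 2 * Ssq) := min_le_left _ _
        calc lam / 2 * (t * Ssq) = t * (lam / 2 * Ssq) := by ring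
          _ ≤ (ε / (lam / 2 * Ssq)) * (lam / 2 * Ssq) :=
              mul_le_mul_of_nonneg_right h3 h4.le
          _ = ε := div_mul_cancel₀ ε (ne_of_gt h4)
      linarith [h1, h2]
  -- energy gap upper bound via the dual field
  have hJdiff : Jh (u n) - Jh ubar ≤ eps - ⟪D, u n - ubar⟫_ℝ - lam / 2 * Ssq := by
    have hadj : ∀ x : GridImage N M,
        ⟪(LinearMap.adjoint gradh) (ξ (n+1)), x⟫_ℝ = ∑ k, ⟪ξ (n+1) k, gradh x k⟫_ℝ := by
      intro x
      rw [LinearMap.adjoint_inner_left]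
      exact PiLp.inner_apply _ _
    have hTVw : ∑ k, ⟪ξ (n+1) k, gradh ubar k⟫_ℝ ≤ ∑ k, ‖gradh ubar k‖ := by
      refine Finset.sum_le_sum fun k _ => ?_
      calc ⟪ξ (n+1) k, gradh ubar k⟫_ℝ
          ≤ ‖ξ (n+1) k‖ * ‖gradh ubar k‖ := real_inner_le_norm _ _
        _ ≤ 1 * ‖gradh ubar k‖ := mul_le_mul_of_nonneg_right (hξ'norm k) (norm_nonneg _)
        _ = ‖gradh ubar k‖ := one_mul _
    have hTVv : ∑ k, ‖gradh (u n) k‖ = eps + ∑ k, ⟪ξ (n+1) k, gradh (u n) k⟫_ℝ := by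
      rw [hepsdef, Finset.sum_sub_distrib]
      ring
    have hsplit : (∑ k, ⟪ξ (n+1) k, gradh (u n) k⟫_ℝ) - ∑ k, ⟪ξ (n+1) k, gradh ubar k⟫_ℝ
        = -⟪D, u n - ubar⟫_ℝ - lam * ⟪u n - f, u n - ubar⟫_ℝ := by
      rw [← hadj (u n), ← hadj ubar, ← inner_sub_right, hA]
      rw [inner_sub_left, inner_neg_left, real_inner_smul_left, real_inner_smul_left]
    have hvf : ⟪u n - f, u n - ubar⟫_ℝ = ∑ k, (u n k - f k) * (u n k - ubar k) := by
      rw [PiLp.inner_apply]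
      refine Finset.sum_congr rfl fun k _ => ?_
      simp only [PiLp.sub_apply, RCLike.inner_apply, conj_trivial]
      ring
    have hQid : lam / 2 * ∑ k, (u n k - f k) ^ 2 - lam / 2 * ∑ k, (ubar k - f k) ^ 2
        = lam * (∑ k, (u n k - f k) * (u n k - ubar k)) - lam / 2 * Ssq := by
      have h : (∑ k, (u n k - f k) ^ 2) - ∑ k, (ubar k - f k) ^ 2
          = 2 * (∑ k, (u n k - f k) * (u n k - ubar k)) - Ssq := by
        rw [hSdef, Finset.mul_sum, ← Finset.sum_sub_distrib, ← Finset.sum_sub_distrib]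
        exact Finset.sum_congr rfl fun k _ => by ring
      linear_combination (lam / 2) * h
    rw [hvf] at hsplit
    rw [hJh (u n), hJh ubar]
    linarith [hTVw, hTVv, hsplit, hQid]
  -- combine
  have hDi : -⟪D, u n - ubar⟫_ℝ ≤ ‖D‖ * ‖u n - ubar‖ := by
    have h := abs_real_inner_le_norm D (u n - ubar)
    have h2 := neg_abs_le ⟪D, u n - ubar⟫_ℝ
    linarith
  have hmain : lam * Ssq ≤ eps + ‖D‖ * ‖u n - ubar‖ := by linarith
  have hr2 : ‖u n - ubar‖ ^ 2
      ≤ (‖D‖ / lam) * ‖u n - ubar‖ + 2 * Real.sqrt ((N:ℝ) * (M:ℝ)) * ‖E‖ / lam := by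
    rw [hnormsq]
    rw [div_mul_eq_mul_div, ← add_div, le_div_iff₀ hlam]
    linarith [hmain, heps_le]
  have hq := quad_root_bound ‖u n - ubar‖ (‖D‖ / lam)
    (2 * Real.sqrt ((N:ℝ) * (M:ℝ)) * ‖E‖ / lam) (by positivity) hr2
  have harg : (‖D‖ / lam) ^ 2 + 4 * (2 * Real.sqrt ((N:ℝ) * (M:ℝ)) * ‖E‖ / lam)
      = ‖D‖ ^ 2 / lam ^ 2 + 8 * Real.sqrt ((N:ℝ) * (M:ℝ)) * ‖E‖ / lam := by
    rw [div_pow]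
    ring
  rw [harg] at hq
  calc ‖u n - ubar‖ ≤ _ := hq
    _ = (1 / 2) * (‖D‖ / lam + Real.sqrt (‖D‖ ^ 2 / lam ^ 2
        + 8 * Real.sqrt ((N:ℝ) * (M:ℝ)) * ‖E‖ / lam)) := by ring
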